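/- For all i ≠ j and all signs ε, δ ∈ {+1,−1}: (K+1)(X_i · I_{ij}^ε P_i^δ) = δ (2 I_{ij}^ε P_i^δ − 1/2), an inhomogeneous proper-value equation with proper value 2δ and co-value −δ/2. -/
import Mathlib


open scoped TensorProduct

noncomputable section

/-- The standard positive-definite quadratic form on `ℝ³`. -/
abbrev Q3 : QuadraticForm ℝ (Fin 3 → ℝ) :=
  QuadraticMap.weightedSumSquares ℝ (fun _ : Fin 3 => (1 : ℝ))

/-- The Clifford algebra of 3-dimensional Euclidean space. -/
abbrev Cl3 : Type := CliffordAlgebra Q3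

/-- The tensor product of two copies of `Cl3`, as ℝ-algebras. -/
abbrev A3 : Type := Cl3 ⊗[ℝ] Cl3

/-- The generators `e₁, e₂, e₃` (indexed by `Fin 3`). -/
def e (l : Fin 3) : Cl3 := CliffordAlgebra.ι Q3 (Pi.single l 1)

/-- `X_l := e_l ⊗ e_l`. -/
def X (l : Fin 3) : A3 := e l ⊗ₜ[ℝ] e l

/-- `w^i := (e_j e_k) ⊗ 1` for `(i,j,k)` a cyclic permutation of the indices. -/
def w (i : Fin 3) : A3 := (e (i + 1) * e (i + 2)) ⊗ₜ[ℝ] (1 : Cl3)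

/-- The (ℝ-linear) operators `J_l(U) := (1/2)(w^l U − U w^l)`. -/
def J (l : Fin 3) (U : A3) : A3 := (1/2 : ℝ) • (w l * U - U * w l)

/-- Kähler's total angular momentum operator `K+1`. -/
def K1 (U : A3) : A3 := J 0 U * w 0 + J 1 U * w 1 + J 2 U * w 2

/-- The idempotents `I_{ij}^ε := (1/2)(1 + ε X_i X_j)`. -/
def Iem (i j : Fin 3) (ε : ℝ) : A3 := (1/2 : ℝ) • ((1 : A3) + ε • (X i * X j))

/-- The idempotents `P_l^δ := (1/2)(1 + δ X_l)`. -/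
def P (l : Fin 3) (δ : ℝ) : A3 := (1/2 : ℝ) • ((1 : A3) + δ • X l)

lemma e_sq (l : Fin 3) : e l * e l = 1 := by
  rw [e, CliffordAlgebra.ι_sq_scalar]
  simp [QuadraticMap.weightedSumSquares_apply, Pi.single_apply]

lemma e_anti {l m : Fin 3} (h : l ≠ m) : e l * e m = -(e m * e l) := by
  apply CliffordAlgebra.ι_mul_ι_comm_of_isOrtho
  fin_cases l <;> fin_cases m <;>
    simp_all [QuadraticMap.IsOrtho, QuadraticMap.weightedSumSquares_apply, Pi.single_apply,
      Fin.sum_univ_three]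

lemma e_sq' (l : Fin 3) (x : Cl3) : e l * (e l * x) = x := by
  rw [← mul_assoc, e_sq, one_mul]
lemma swap10 : e 1 * e 0 = -(e 0 * e 1) := e_anti (by decide)
lemma swap20 : e 2 * e 0 = -(e 0 * e 2) := e_anti (by decide)
lemma swap21 : e 2 * e 1 = -(e 1 * e 2) := e_anti (by decide)
lemma swap10' (x : Cl3) : e 1 * (e 0 * x) = -(e 0 * (e 1 * x)) := by
  rw [← mul_assoc, swap10, neg_mul, mul_assoc]
lemma swap20' (x : Cl3) : e 2 * (e 0 * x) = -(e 0 * (e 2 * x)) := by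
  rw [← mul_assoc, swap20, neg_mul, mul_assoc]
lemma swap21' (x : Cl3) : e 2 * (e 1 * x) = -(e 1 * (e 2 * x)) := by
  rw [← mul_assoc, swap21, neg_mul, mul_assoc]
lemma e_sq0 : e 0 * e 0 = 1 := e_sq 0
lemma e_sq1 : e 1 * e 1 = 1 := e_sq 1
lemma e_sq2 : e 2 * e 2 = 1 := e_sq 2
lemma w0 : w 0 = (e 1 * e 2) ⊗ₜ[ℝ] 1 := rfl
lemma w1 : w 1 = (e 2 * e 0) ⊗ₜ[ℝ] 1 := rfl
lemma w2 : w 2 = (e 0 * e 1) ⊗ₜ[ℝ] 1 := rfl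
lemma two_mul' (x : A3) : 2 * x = (2:ℝ) • x := by rw [two_smul, two_mul]
lemma two_eq : (2 : A3) = (2:ℝ) • 1 := by rw [two_smul]; norm_num
lemma fmk0 : (⟨0, by norm_num⟩ : Fin 3) = 0 := rfl
lemma fmk1 : (⟨1, by norm_num⟩ : Fin 3) = 1 := rfl
lemma fmk2 : (⟨2, by norm_num⟩ : Fin 3) = 2 := rfl

set_option maxHeartbeats 1000000

/-- For `i ≠ j` and signs `ε, δ`:
`(K+1)(X_i I_{ij}^ε P_i^δ) = δ (2 I_{ij}^ε P_i^δ − 1/2)`. -/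
theorem stmt11 (i j : Fin 3) (hij : i ≠ j)
    (ε δ : ℝ) (hε : ε = 1 ∨ ε = -1) (hδ : δ = 1 ∨ δ = -1) :
    K1 (X i * (Iem i j ε * P i δ)) =
      δ • (2 * (Iem i j ε * P i δ) - (1/2 : ℝ) • (1 : A3)) := by
  rcases hε with rfl | rfl <;> rcases hδ with rfl | rfl <;>
    fin_cases i <;> fin_cases j <;> first
  | exact absurd rfl hij
  | (simp only [Fin.isValue, fmk0, fmk1, fmk2,
      K1, J, Iem, P, X, w0, w1, w2, one_smul, two_mul', two_eq,
      smul_add, smul_sub, smul_smul, mul_add, add_mul, mul_sub, sub_mul, mul_one, one_mul,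
      smul_mul_assoc, mul_smul_comm, Algebra.TensorProduct.tmul_mul_tmul,
      mul_assoc, e_sq0, e_sq1, e_sq2, e_sq', swap10, swap20, swap21, swap10', swap20', swap21',
      neg_mul, mul_neg, neg_neg, smul_neg, neg_smul, TensorProduct.tmul_neg, TensorProduct.neg_tmul,
      ← Algebra.TensorProduct.one_def]
     module)
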